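/- Let p ≥ 1, D ≥ 2, and let μ be a real with 1 ≤ μ ≤ D. For every scheduled instance on m machines in which every duration satisfies 1 ≤ d_j ≤ D: sup over t ∈ ℝ of ‖ℓ_μ(t)‖_p ≤ 100·μ·(1 + ln D) · sup over t ∈ ℝ of ‖ℓ(t)‖_p. -/

import Mathlib

open Finset
open scoped Classical

lemma myLp_mono {m : ℕ} {p : ℝ} (hp : 1 ≤ p) (x y : Fin m → ℝ)
    (hx : ∀ i, 0 ≤ x i) (hxy : ∀ i, x i ≤ y i) :
    (∑ i, x i ^ p) ^ (1 / p) ≤ (∑ i, y i ^ p) ^ (1 / p) := by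
  have hppos : (0:ℝ) < p := lt_of_lt_of_le one_pos hp
  apply Real.rpow_le_rpow
  · exact Finset.sum_nonneg fun i _ => Real.rpow_nonneg (hx i) p
  · exact Finset.sum_le_sum fun i _ => Real.rpow_le_rpow (hx i) (hxy i) (by linarith)
  · positivity

lemma myLp_sum_le {ι : Type*} {p : ℝ} (hp : 1 ≤ p) {m : ℕ} (G : Finset ι)
    (f : ι → Fin m → ℝ) (hf : ∀ s i, 0 ≤ f s i) :
    (∑ i, (∑ s ∈ G, f s i) ^ p) ^ (1 / p) ≤ ∑ s ∈ G, (∑ i, (f s i) ^ p) ^ (1 / p) := by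
  classical
  have hppos : (0:ℝ) < p := lt_of_lt_of_le one_pos hp
  induction G using Finset.induction_on with
  | empty =>
      simp [Real.zero_rpow (ne_of_gt hppos)]
      rw [Real.zero_rpow (by positivity : p⁻¹ ≠ 0)]
  | @insert a G haG ih =>
      have e1 : (∑ i, (∑ s ∈ insert a G, f s i) ^ p)
          = ∑ i, |f a i + ∑ s ∈ G, f s i| ^ p := by
        refine Finset.sum_congr rfl fun i _ => ?_
        rw [Finset.sum_insert haG,
          abs_of_nonneg (add_nonneg (hf a i) (Finset.sum_nonneg fun s _ => hf s i))]
      have e2 : (∑ i, |f a i| ^ p) = ∑ i, (f a i) ^ p :=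
        Finset.sum_congr rfl fun i _ => by rw [abs_of_nonneg (hf a i)]
      have e3 : (∑ i, |∑ s ∈ G, f s i| ^ p) = ∑ i, (∑ s ∈ G, f s i) ^ p :=
        Finset.sum_congr rfl fun i _ => by
          rw [abs_of_nonneg (Finset.sum_nonneg fun s _ => hf s i)]
      calc (∑ i, (∑ s ∈ insert a G, f s i) ^ p) ^ (1 / p)
          = (∑ i, |f a i + ∑ s ∈ G, f s i| ^ p) ^ (1 / p) := by rw [e1]
        _ ≤ (∑ i, |f a i| ^ p) ^ (1 / p) + (∑ i, |∑ s ∈ G, f s i| ^ p) ^ (1 / p) :=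
            Real.Lp_add_le _ _ _ hp
        _ ≤ (∑ i, (f a i) ^ p) ^ (1 / p) + ∑ s ∈ G, (∑ i, (f s i) ^ p) ^ (1 / p) := by
            rw [e2, e3]; exact add_le_add_right ih _
        _ = ∑ s ∈ insert a G, (∑ i, (f s i) ^ p) ^ (1 / p) := by
            rw [Finset.sum_insert haG]

lemma grid_cover (μ D : ℝ) (hμ1 : 1 ≤ μ) (hD : 2 ≤ D) (hμD : μ ≤ D) :
    ∃ G : Finset ℝ, (G.card : ℝ) ≤ 100 * μ * (1 + Real.log D) ∧
      ∀ v L : ℝ, 0 < v → v ≤ μ * L → 1 ≤ L → L ≤ D →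
        ∃ s ∈ G, v - L ≤ s ∧ s < v := by
  have hμ0 : (0:ℝ) < μ := by linarith
  set g : ℝ := 1 + 1/μ with hgdef
  have hg1 : 1 < g := by
    have : 0 < 1/μ := by positivity
    simp only [hgdef]; linarith
  have hg0 : (0:ℝ) < g := by linarith
  set K : ℕ := ⌈4 * μ * Real.log D⌉₊ with hKdef
  have hld : (0:ℝ) ≤ Real.log D := Real.log_nonneg (by linarith)
  have hlμ : Real.log μ ≤ Real.log D := Real.log_le_log hμ0 hμD
  -- log g ≥ 1/(2μ)
  have hlg : 1/(2*μ) ≤ Real.log g := by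
    have h1 := Real.log_le_sub_one_of_pos (show (0:ℝ) < g⁻¹ by positivity)
    rw [Real.log_inv] at h1
    have h2 : g⁻¹ = μ/(μ+1) := by
      rw [hgdef]; field_simp
    have h3 : 1/(2*μ) ≤ 1 - μ/(μ+1) := by
      rw [div_le_iff₀ (by positivity : (0:ℝ) < 2*μ)]
      have : 1 - μ/(μ+1) = 1/(μ+1) := by field_simp; ring
      rw [this, one_div, inv_mul_eq_div, le_div_iff₀ (by linarith : (0:ℝ) < μ+1)]
      nlinarith
    rw [h2] at h1
    linarith
  have hgK : μ * D ≤ g ^ K := by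
    have hc0 : (0:ℝ) ≤ Real.log g := le_trans (by positivity) hlg
    have hc : 1 ≤ 2*μ*Real.log g := by
      rw [div_le_iff₀ (by positivity : (0:ℝ) < 2*μ)] at hlg
      linarith
    have hK : 4*μ*Real.log D ≤ (K:ℝ) := Nat.le_ceil _
    have hlog : Real.log μ + Real.log D ≤ (K:ℝ) * Real.log g := by
      nlinarith [mul_le_mul_of_nonneg_right hK hc0,
        mul_nonneg hld (by linarith : (0:ℝ) ≤ 2*μ*Real.log g - 1)]
    have := Real.exp_le_exp.mpr hlog
    rw [← Real.log_mul (ne_of_gt hμ0) (by positivity),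
      Real.exp_log (by positivity : (0:ℝ) < μ * D)] at this
    calc μ * D ≤ Real.exp ((K:ℝ) * Real.log g) := this
      _ = g ^ K := by
          rw [← Real.log_pow, Real.exp_log (pow_pos hg0 K)]
  refine ⟨insert 0 ((Finset.range (K+1)).image fun k => g ^ k), ?_, ?_⟩
  · have h1 : (insert (0:ℝ) ((Finset.range (K+1)).image fun k => g ^ k)).card ≤ K + 2 := by
      calc _ ≤ ((Finset.range (K+1)).image fun k => g ^ k).card + 1 :=
            Finset.card_insert_le _ _
        _ ≤ (K + 1) + 1 := by
            have := Finset.card_image_le (s := Finset.range (K+1)) (f := fun k => g ^ k)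
            simp only [Finset.card_range] at this
            omega
        _ = K + 2 := rfl
    have h2 : (K:ℝ) < 4*μ*Real.log D + 1 := Nat.ceil_lt_add_one (by positivity)
    have h3 : ((insert (0:ℝ) ((Finset.range (K+1)).image fun k => g ^ k)).card : ℝ) ≤ (K:ℝ) + 2 := by
      exact_mod_cast h1
    nlinarith
  · intro v L hv hvμ hL hLD
    by_cases hv1 : v ≤ 1
    · exact ⟨0, Finset.mem_insert_self _ _, by constructor <;> linarith⟩
    · push_neg at hv1
      have hP : v ≤ g ^ (K+1) := by
        have h1 : μ * L ≤ μ * D := by nlinarith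
        have h2 : g ^ K ≤ g ^ (K+1) := pow_le_pow_right₀ (le_of_lt hg1) (by omega)
        linarith
      have hex : ∃ k, v ≤ g ^ (k+1) := ⟨K, hP⟩
      set k := Nat.find hex with hkdef
      have hk1 : v ≤ g ^ (k+1) := Nat.find_spec hex
      have hkK : k ≤ K := Nat.find_le hP
      have hklt : g ^ k < v := by
        rcases Nat.eq_zero_or_pos k with h | h
        · rw [h, pow_zero]; exact hv1
        · have := Nat.find_min hex (show k - 1 < k by omega)
          push_neg at this
          have hkk : k - 1 + 1 = k := by omega
          rwa [hkk] at this
      refine ⟨g ^ k, Finset.mem_insert_of_mem (Finset.mem_image.mpr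
        ⟨k, Finset.mem_range.mpr (by omega), rfl⟩), ?_, hklt⟩
      have hdiv : v / g ≤ g ^ k := by
        rw [div_le_iff₀ hg0, ← pow_succ]
        exact hk1
      have key : v - L ≤ v / g := by
        rw [hgdef, le_div_iff₀ (by positivity : (0:ℝ) < 1 + 1/μ)]
        have h5 : v * (1/μ) ≤ L := by
          rw [mul_one_div, div_le_iff₀ hμ0]; nlinarith
        have h6 : 0 ≤ L * (1/μ) := by positivity
        nlinarith
      linarith

/-- Load of machine `i` at time `t : ℝ` in a scheduled instance on `m` machines
with `n` jobs: job `j` has arrival `a j`, duration `d j`, weight `w j` and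
assigned machine `A j`; job `j` contributes at times `t` with
`a j < t ≤ a j + d j`. -/
noncomputable def machineLoad (m n : ℕ) (a d w : Fin n → ℝ) (A : Fin n → Fin m)
    (i : Fin m) (t : ℝ) : ℝ :=
  ∑ j ∈ Finset.univ.filter (fun j : Fin n => A j = i ∧ a j < t ∧ t ≤ a j + d j), w j

/-- The `ℓ_p` norm of the load vector. -/
noncomputable def loadNorm (m n : ℕ) (p : ℝ) (a d w : Fin n → ℝ) (A : Fin n → Fin m)
    (t : ℝ) : ℝ :=
  (∑ i, machineLoad m n a d w A i t ^ p) ^ (1 / p)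

/-- for `p ≥ 1`, `D ≥ 2`, `1 ≤ μ ≤ D`, and any scheduled instance
whose durations lie in `[1, D]`, blowing up all durations by the factor `μ`
increases the supremum over time of the `ℓ_p` norm of the load vector by at
most a factor `100·μ·(1 + ln D)`. -/
theorem stmt6 (p D μ : ℝ) (hp : 1 ≤ p) (hD : 2 ≤ D) (hμ1 : 1 ≤ μ) (hμD : μ ≤ D)
    (m n : ℕ) (a d w : Fin n → ℝ) (A : Fin n → Fin m)
    (ha : ∀ j, 0 ≤ a j) (hw : ∀ j, 0 ≤ w j) (hd : ∀ j, 1 ≤ d j ∧ d j ≤ D) :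
    (⨆ t : ℝ, loadNorm m n p a (fun j => μ * d j) w A t)
      ≤ 100 * μ * (1 + Real.log D) * ⨆ t : ℝ, loadNorm m n p a d w A t := by
  obtain ⟨G, hGcard, hGcov⟩ := grid_cover μ D hμ1 hD hμD
  have hML_nonneg : ∀ (d' : Fin n → ℝ) (i : Fin m) (t : ℝ),
      0 ≤ machineLoad m n a d' w A i t :=
    fun d' i t => Finset.sum_nonneg fun j _ => hw j
  have hML_le : ∀ (d' : Fin n → ℝ) (i : Fin m) (t : ℝ),
      machineLoad m n a d' w A i t ≤ ∑ j, w j :=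
    fun d' i t => Finset.sum_le_sum_of_subset_of_nonneg (Finset.filter_subset _ _)
      (fun j _ _ => hw j)
  have hLNn : ∀ (d' : Fin n → ℝ) (t : ℝ), 0 ≤ loadNorm m n p a d' w A t :=
    fun d' t => Real.rpow_nonneg
      (Finset.sum_nonneg fun i _ => Real.rpow_nonneg (hML_nonneg d' i t) p) _
  have hLNb : ∀ (d' : Fin n → ℝ) (t : ℝ),
      loadNorm m n p a d' w A t ≤ (∑ i : Fin m, (∑ j, w j) ^ p) ^ (1/p) :=
    fun d' t => myLp_mono hp _ _ (fun i => hML_nonneg d' i t) (fun i => hML_le d' i t)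
  have hbdd : ∀ d' : Fin n → ℝ, BddAbove (Set.range (loadNorm m n p a d' w A)) :=
    fun d' => ⟨(∑ i : Fin m, (∑ j, w j) ^ p) ^ (1/p), by
      rintro x ⟨t, rfl⟩; exact hLNb d' t⟩
  set S := ⨆ t : ℝ, loadNorm m n p a d w A t with hSdef
  have hS : ∀ t : ℝ, loadNorm m n p a d w A t ≤ S := fun t => le_ciSup (hbdd d) t
  have hS0 : 0 ≤ S := le_trans (hLNn d 0) (hS 0)
  apply ciSup_le
  intro t
  have hpt : ∀ i : Fin m, machineLoad m n a (fun j => μ * d j) w A i t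
      ≤ ∑ s ∈ G, machineLoad m n a d w A i (t - s) := by
    intro i
    unfold machineLoad
    simp only [Finset.sum_filter]
    rw [Finset.sum_comm]
    apply Finset.sum_le_sum
    intro j _
    by_cases hj : A j = i ∧ a j < t ∧ t ≤ a j + μ * d j
    · obtain ⟨s, hsG, hs1, hs2⟩ := hGcov (t - a j) (d j) (by linarith [hj.2.1])
        (by linarith [hj.2.2]) (hd j).1 (hd j).2
      have hcond : A j = i ∧ a j < t - s ∧ t - s ≤ a j + d j :=
        ⟨hj.1, by linarith, by linarith⟩
      rw [if_pos hj]
      calc w j = (if A j = i ∧ a j < t - s ∧ t - s ≤ a j + d j then w j else 0) := by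
            rw [if_pos hcond]
        _ ≤ ∑ s ∈ G, (if A j = i ∧ a j < t - s ∧ t - s ≤ a j + d j then w j else 0) := by
            refine Finset.single_le_sum
              (f := fun s' : ℝ => if A j = i ∧ a j < t - s' ∧ t - s' ≤ a j + d j then w j else 0)
              (fun s' _ => ?_) hsG
            split_ifs
            · exact hw j
            · exact le_refl 0
    · rw [if_neg hj]
      refine Finset.sum_nonneg fun s _ => ?_
      split_ifs
      · exact hw j
      · exact le_refl 0
  calc loadNorm m n p a (fun j => μ * d j) w A t
      ≤ (∑ i, (∑ s ∈ G, machineLoad m n a d w A i (t - s)) ^ p) ^ (1/p) :=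
        myLp_mono hp _ _ (fun i => hML_nonneg _ i t) hpt
    _ ≤ ∑ s ∈ G, (∑ i, machineLoad m n a d w A i (t - s) ^ p) ^ (1/p) :=
        myLp_sum_le hp G _ (fun s i => hML_nonneg d i (t - s))
    _ = ∑ s ∈ G, loadNorm m n p a d w A (t - s) := rfl
    _ ≤ (G.card : ℝ) * S := by
        rw [← nsmul_eq_mul, ← Finset.sum_const]
        exact Finset.sum_le_sum fun s _ => hS (t - s)
    _ ≤ 100 * μ * (1 + Real.log D) * S := mul_le_mul_of_nonneg_right hGcard hS0
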